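/- The set of nonnegative integers can be partitioned into two disjoint subsets C and D (with C ∪ D = ℕ and C ∩ D = ∅) such that R_C(n) = R_D(n) for every positive integer n. -/

import Mathlib

/-- `R S n` is the number of unordered representations of `n` as `s + s'`
with `s, s' ∈ S` and `s < s'`. -/
noncomputable def R (S : Set ℕ) (n : ℕ) : ℕ :=
  {p : ℕ × ℕ | p.1 ∈ S ∧ p.2 ∈ S ∧ p.1 < p.2 ∧ p.1 + p.2 = n}.ncard

/-- The Thue–Morse set: nonnegative integers with an even number of
`1` digits in binary. -/
def A : Set ℕ := {n | Even ((Nat.digits 2 n).sum)}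

/-- The complement of the Thue–Morse set. -/
def B : Set ℕ := Aᶜ

open Finset
open scoped Classical

noncomputable def cnt (S : Set ℕ) (n : ℕ) : ℕ :=
  ((Finset.range n).filter (fun i => i ∈ S ∧ n - i ∈ S ∧ 2*i < n)).card

lemma R_eq_cnt (S : Set ℕ) (n : ℕ) : R S n = cnt S n := by
  have hinj : Function.Injective (fun i : ℕ => (i, n - i)) := fun a b h => congrArg Prod.fst h
  have hset : {p : ℕ × ℕ | p.1 ∈ S ∧ p.2 ∈ S ∧ p.1 < p.2 ∧ p.1 + p.2 = n}
      = ↑(((Finset.range n).filter (fun i => i ∈ S ∧ n - i ∈ S ∧ 2*i < n)).image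
          (fun i => (i, n - i))) := by
    ext ⟨x, y⟩
    simp only [Set.mem_setOf_eq, Finset.coe_image, Set.mem_image, Finset.mem_coe,
      Finset.mem_filter, Finset.mem_range]
    constructor
    · rintro ⟨h1, h2, hlt, hsum⟩
      have hy : y = n - x := by omega
      subst hy
      exact ⟨x, ⟨by omega, h1, h2, by omega⟩, rfl⟩
    · rintro ⟨i, ⟨hi, h1, h2, h3⟩, heq⟩
      obtain ⟨rfl, rfl⟩ := Prod.mk.injEq i (n - i) x y ▸ heq
      exact ⟨h1, h2, by omega, by omega⟩
  rw [R, hset, Set.ncard_coe_finset, Finset.card_image_of_injective _ hinj, cnt]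

lemma mem_A_two_mul (k : ℕ) : 2*k ∈ A ↔ k ∈ A := by
  rcases eq_or_ne k 0 with rfl | hk
  · simp
  · simp only [A, Set.mem_setOf_eq]
    rw [Nat.digits_def' (by norm_num : (1:ℕ) < 2) (by omega)]
    simp [Nat.mul_mod_right, Nat.mul_div_cancel_left _ (by norm_num : 0 < 2)]

lemma mem_A_two_mul_add_one (k : ℕ) : 2*k+1 ∈ A ↔ ¬ (k ∈ A) := by
  simp only [A, Set.mem_setOf_eq]
  rw [Nat.digits_def' (by norm_num : (1:ℕ) < 2) (by omega)]
  have h1 : (2*k+1) % 2 = 1 := by omega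
  have h2 : (2*k+1) / 2 = k := by omega
  rw [h1, h2]
  simp [List.sum_cons, add_comm 1, Nat.even_add_one]

noncomputable def g (i : ℕ) : ℤ := if i ∈ A then 1 else -1

lemma g_two_mul (k : ℕ) : g (2*k) = g k := by
  simp [g, mem_A_two_mul]

lemma g_two_mul_add_one (k : ℕ) : g (2*k+1) = - g k := by
  by_cases h : k ∈ A <;> simp [g, mem_A_two_mul_add_one, h]

noncomputable def E (n : ℕ) : ℤ := ∑ i ∈ Finset.range (n+1), g i

lemma zero_mem_A : (0 : ℕ) ∈ A := by simp [A]

lemma E_odd (m : ℕ) : E (2*m+1) = 0 := by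
  induction m with
  | zero =>
    have h0 : g 0 = 1 := by simp [g, zero_mem_A]
    have h1 : g 1 = -1 := by
      have := g_two_mul_add_one 0
      simpa [h0] using this
    simp [E, Finset.sum_range_succ, h0, h1]
  | succ m ih =>
    have e1 : 2*(m+1)+1+1 = (2*m+1+1) + 1 + 1 := by ring
    rw [E, e1, Finset.sum_range_succ, Finset.sum_range_succ]
    have e2 : 2*m+1+1 = 2*(m+1) := by ring
    have e3 : 2*m+1+1+1 = 2*(m+1)+1 := by ring
    rw [e2, e3, g_two_mul, g_two_mul_add_one]
    have : (∑ i ∈ Finset.range (2*m+1+1), g i) = E (2*m+1) := rfl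
    rw [e2] at this
    rw [this, ih]
    ring

lemma E_even (m : ℕ) : E (2*m) = g m := by
  cases m with
  | zero => simp [E]
  | succ m =>
    have e1 : 2*(m+1)+1 = (2*m+1+1) + 1 := by ring
    rw [E, e1, Finset.sum_range_succ]
    have : (∑ i ∈ Finset.range (2*m+1+1), g i) = E (2*m+1) := rfl
    rw [this, E_odd]
    have e2 : 2*m+1+1 = 2*(m+1) := by ring
    rw [e2, g_two_mul]
    ring

lemma sum_ind (S : Set ℕ) (n : ℕ) (hn : 0 < n) :
    ∑ i ∈ Finset.range (n+1), (if i ∈ S ∧ n - i ∈ S then (1:ℤ) else 0)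
      = 2 * (cnt S n : ℤ) + (if n % 2 = 0 ∧ n/2 ∈ S then 1 else 0) := by
  have key : ∀ i ∈ Finset.range (n+1),
      (if i ∈ S ∧ n - i ∈ S then (1:ℤ) else 0)
        = (if i ∈ S ∧ n - i ∈ S ∧ 2*i < n then 1 else 0)
          + (if i = n/2 then (if n % 2 = 0 ∧ n/2 ∈ S then (1:ℤ) else 0) else 0)
          + (if n - i ∈ S ∧ i ∈ S ∧ 2*(n-i) < n then 1 else 0) := by
    intro i hi
    simp only [Finset.mem_range] at hi
    rcases lt_trichotomy (2*i) n with h|h|h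
    · have hmid : (if i = n/2 then (if n % 2 = 0 ∧ n/2 ∈ S then (1:ℤ) else 0) else 0) = 0 := by
        split_ifs with ha hb
        · obtain ⟨hb1, -⟩ := hb; omega
        · rfl
        · rfl
      have h3 : ¬ (n - i ∈ S ∧ i ∈ S ∧ 2*(n-i) < n) := by rintro ⟨-, -, hc⟩; omega
      rw [hmid, add_zero, if_neg h3, add_zero]
      by_cases hp : i ∈ S ∧ n - i ∈ S
      · rw [if_pos hp, if_pos ⟨hp.1, hp.2, h⟩]
      · rw [if_neg hp, if_neg (fun hc => hp ⟨hc.1, hc.2.1⟩)]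
    · have heq : i = n/2 := by omega
      have hm : n % 2 = 0 := by omega
      have hni : n - i = i := by omega
      have h6 : ¬ (i ∈ S ∧ n - i ∈ S ∧ 2*i < n) := by rintro ⟨-, -, hc⟩; omega
      have h7 : ¬ (n - i ∈ S ∧ i ∈ S ∧ 2*(n-i) < n) := by rintro ⟨-, -, hc⟩; omega
      rw [if_neg h6, if_neg h7, if_pos heq, zero_add, add_zero]
      by_cases hp : i ∈ S
      · have hp2 : n/2 ∈ S := heq ▸ hp
        rw [if_pos ⟨hp, (by rw [hni]; exact hp : n - i ∈ S)⟩, if_pos ⟨hm, hp2⟩]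
      · have hp2 : ¬ (n/2 ∈ S) := fun hc => hp (heq ▸ hc)
        rw [if_neg (fun hc => hp hc.1), if_neg (fun hc => hp2 hc.2)]
    · have hmid : (if i = n/2 then (if n % 2 = 0 ∧ n/2 ∈ S then (1:ℤ) else 0) else 0) = 0 := by
        split_ifs with ha hb
        · obtain ⟨hb1, -⟩ := hb; omega
        · rfl
        · rfl
      have h3 : ¬ (i ∈ S ∧ n - i ∈ S ∧ 2*i < n) := by rintro ⟨-, -, hc⟩; omega
      have h5 : 2*(n-i) < n := by omega
      rw [hmid, add_zero, if_neg h3, zero_add]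
      by_cases hp : i ∈ S ∧ n - i ∈ S
      · rw [if_pos hp, if_pos ⟨hp.2, hp.1, h5⟩]
      · rw [if_neg hp, if_neg (fun hc => hp ⟨hc.2.1, hc.1⟩)]
  rw [Finset.sum_congr rfl key, Finset.sum_add_distrib, Finset.sum_add_distrib]
  have hA : ∑ i ∈ Finset.range (n+1), (if i ∈ S ∧ n - i ∈ S ∧ 2*i < n then (1:ℤ) else 0)
      = (cnt S n : ℤ) := by
    rw [Finset.sum_range_succ]
    have hno : ¬ (n ∈ S ∧ n - n ∈ S ∧ 2*n < n) := by rintro ⟨-, -, h⟩; omega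
    rw [if_neg hno, add_zero, cnt, Finset.card_filter]
    push_cast
    rfl
  have hB : ∑ i ∈ Finset.range (n+1),
      (if i = n/2 then (if n % 2 = 0 ∧ n/2 ∈ S then (1:ℤ) else 0) else 0)
      = (if n % 2 = 0 ∧ n/2 ∈ S then (1:ℤ) else 0) := by
    rw [Finset.sum_ite_eq' (Finset.range (n+1)) (n/2)
      (fun _ => if n % 2 = 0 ∧ n/2 ∈ S then (1:ℤ) else 0)]
    rw [if_pos (by simp only [Finset.mem_range]; omega)]
  have hC : ∑ i ∈ Finset.range (n+1), (if n - i ∈ S ∧ i ∈ S ∧ 2*(n-i) < n then (1:ℤ) else 0)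
      = ∑ i ∈ Finset.range (n+1), (if i ∈ S ∧ n - i ∈ S ∧ 2*i < n then (1:ℤ) else 0) := by
    have hr := Finset.sum_range_reflect
      (fun j => if j ∈ S ∧ n - j ∈ S ∧ 2*j < n then (1:ℤ) else 0) (n+1)
    rw [← hr]
    apply Finset.sum_congr rfl
    intro i hi
    simp only [Finset.mem_range] at hi
    have h1 : n + 1 - 1 - i = n - i := by omega
    have h2 : n - (n - i) = i := by omega
    rw [h1, h2]
  rw [hA, hB, hC, hA]
  ring

lemma cnt_eq (n : ℕ) (hn : 0 < n) : cnt A n = cnt B n := by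
  have key : ∀ i ∈ Finset.range (n+1), g i + g (n - i)
      = 2*(if i ∈ A ∧ n - i ∈ A then (1:ℤ) else 0)
        - 2*(if i ∈ B ∧ n - i ∈ B then (1:ℤ) else 0) := by
    intro i _
    by_cases h1 : i ∈ A <;> by_cases h2 : n - i ∈ A <;>
      simp [g, B, Set.mem_compl_iff, h1, h2]
  have hrefl : ∑ i ∈ Finset.range (n+1), g (n - i) = E n := by
    have hr := Finset.sum_range_reflect g (n+1)
    simpa [E] using hr
  have h2 : ∑ i ∈ Finset.range (n+1), (g i + g (n - i)) = 2 * E n := by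
    rw [Finset.sum_add_distrib, hrefl, E]; ring
  rw [Finset.sum_congr rfl key, Finset.sum_sub_distrib,
    ← Finset.mul_sum, ← Finset.mul_sum, sum_ind A n hn, sum_ind B n hn] at h2
  have hE : E n = (if n % 2 = 0 ∧ n/2 ∈ A then (1:ℤ) else 0)
      - (if n % 2 = 0 ∧ n/2 ∈ B then (1:ℤ) else 0) := by
    rcases Nat.even_or_odd n with ⟨m, hm⟩ | ⟨m, hm⟩
    · have hn2 : n = 2*m := by omega
      subst hn2
      have hd : 2*m/2 = m := by omega
      have hm0 : 2*m % 2 = 0 := by omega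
      rw [E_even, hd, hm0]
      by_cases hma : m ∈ A <;> simp [g, B, Set.mem_compl_iff, hma]
    · have hn2 : n = 2*m+1 := by omega
      subst hn2
      have hm1 : (2*m+1) % 2 ≠ 0 := by omega
      rw [E_odd]
      simp [hm1]
  rw [hE] at h2
  have : (cnt A n : ℤ) = (cnt B n : ℤ) := by linarith
  exact_mod_cast this

theorem dombi_partition :
    ∃ C D : Set ℕ, C ∪ D = Set.univ ∧ C ∩ D = ∅ ∧
      ∀ n : ℕ, 0 < n → R C n = R D n := by
  refine ⟨A, B, Set.union_compl_self A, Set.inter_compl_self A, fun n hn => ?_⟩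
  rw [R_eq_cnt, R_eq_cnt, cnt_eq n hn]
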